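/- The grafting product on rooted trees, τ₁ ↷ τ₂ = Σ_{v ∈ V(τ₂)} τ₁ ∘_v τ₂ (attaching the root of τ₁ to vertex v of τ₂), satisfies the left pre-Lie identity: τ₁ ↷ (τ₂ ↷ τ₃) − (τ₁ ↷ τ₂) ↷ τ₃ = τ₂ ↷ (τ₁ ↷ τ₃) − (τ₂ ↷ τ₁) ↷ τ₃. -/

import Mathlib

/-- Planar representatives of rooted trees. -/
inductive PT : Type
  | node : List PT → PT

namespace PT

/-- Grafting of a tree `τ` into a forest: attach the root of `τ` by a new edge to
one of the vertices of one of the trees, in all possible ways. -/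
def graftTF (τ : PT) : List PT → Multiset (List PT)
  | [] => 0
  | PT.node l :: ω =>
      {PT.node (τ :: l) :: ω}
      + (graftTF τ l).map (fun l' => PT.node l' :: ω)
      + (graftTF τ ω).map (fun ω' => PT.node l :: ω')
decreasing_by
  all_goals simp_wf <;> omega

/-- `τ₁ ↷ τ₂ = Σ_{v ∈ V(τ₂)} τ₁ ∘_v τ₂`: attach the root of `τ₁` by a new edge to
each vertex of `τ₂`. -/
def graftAll (τ : PT) : PT → Multiset PT
  | PT.node l => PT.node (τ :: l) ::ₘ (graftTF τ l).map PT.node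

/-- An injective code of the isomorphism class of the underlying non-planar rooted
tree: `code (B⁺(τ₁⋯τ_k)) = ∏ᵢ p_{code τᵢ}` with `p_j` the `j`-th prime. -/
noncomputable def code : PT → ℕ
  | .node l => (l.attach.map (fun c => Nat.nth Nat.Prime (code c.1))).prod
decreasing_by
  simp_wf
  have := List.sizeOf_lt_of_mem c.2
  omega

/-- The canonical planar representative of the isomorphism class of a tree:
recursively sort all branch lists by code.  Identifies `PT` modulo planarity with
non-planar rooted trees. -/
noncomputable def norm : PT → PT
  | .node l =>
      PT.node (List.insertionSort (fun a b => code a ≤ code b)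
        (l.attach.map (fun c => norm c.1)))
decreasing_by
  simp_wf
  have := List.sizeOf_lt_of_mem c.2
  omega

noncomputable instance : DecidableEq PT := Classical.decEq _

/-- the comparison relation used by `norm` -/
abbrev rle (a b : PT) : Prop := code a ≤ code b

instance : IsTotal PT rle := ⟨fun a b => Nat.le_total _ _⟩
instance : IsTrans PT rle := ⟨fun _ _ _ h h' => le_trans h h'⟩

theorem code_node (l : List PT) :
    code (node l) = (l.map (fun c => Nat.nth Nat.Prime (code c))).prod := by
  rw [code]
  congr 1
  rw [← List.attach_map_val (l := l) (f := fun c => Nat.nth Nat.Prime (code c))]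

theorem norm_node (l : List PT) :
    norm (node l) = node (List.insertionSort rle (l.map norm)) := by
  rw [norm]
  congr 1
  rw [← List.attach_map_val (l := l) (f := norm)]

/-- uniqueness of sorted lists, with antisymmetry only on the elements involved -/
theorem sorted_eq : ∀ (l₁ l₂ : List PT), l₁.Perm l₂ → l₁.Pairwise rle → l₂.Pairwise rle →
    (∀ a ∈ l₁, ∀ b ∈ l₂, code a = code b → a = b) → l₁ = l₂ := by
  intro l₁
  induction l₁ with
  | nil => intro l₂ hp _ _ _; simpa using hp.symm
  | cons a t ih =>
    intro l₂ hp hs₁ hs₂ hanti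
    cases l₂ with
    | nil => simp at hp
    | cons b t₂ =>
      have hab : a = b := by
        have ha2 : a ∈ b :: t₂ := hp.mem_iff.1 (List.mem_cons_self (a := a) (l := t))
        have hb1 : b ∈ a :: t := hp.symm.mem_iff.1 (List.mem_cons_self (a := b) (l := t₂))
        rcases List.mem_cons.1 ha2 with h | h
        · exact h
        rcases List.mem_cons.1 hb1 with h' | h'
        · exact h'.symm
        have h1 : rle a b := List.rel_of_pairwise_cons hs₁ h'
        have h2 : rle b a := List.rel_of_pairwise_cons hs₂ h
        exact hanti a (List.mem_cons_self (a := a) (l := t)) b (List.mem_cons_self (a := b) (l := t₂))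
          (le_antisymm h1 h2)
      subst hab
      have hp' : t.Perm t₂ := (List.perm_cons a).1 hp
      have := ih t₂ hp' hs₁.of_cons hs₂.of_cons
        (fun x hx y hy => hanti x (List.mem_cons_of_mem a hx) y (List.mem_cons_of_mem a hy))
      rw [this]

theorem nthp_prime (k : ℕ) : (Nat.nth Nat.Prime k).Prime :=
  Nat.nth_mem_of_infinite Nat.infinite_setOf_prime k

theorem nthp_inj : Function.Injective (Nat.nth Nat.Prime) :=
  Nat.nth_injective Nat.infinite_setOf_prime

theorem sizeOf_mem_le {l : List PT} {a : PT} (ha : a ∈ l) {n : ℕ}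
    (h : sizeOf (node l) ≤ n + 1) : sizeOf a ≤ n := by
  have h1 := List.sizeOf_lt_of_mem ha
  have : sizeOf (node l) = 1 + sizeOf l := by simp
  omega

theorem code_norm : ∀ t : PT, code (norm t) = code t := by
  have key : ∀ n, ∀ t : PT, sizeOf t ≤ n → code (norm t) = code t := by
    intro n
    induction n with
    | zero => intro t h; obtain ⟨l⟩ := t; simp at h
    | succ n ih =>
      intro t ht
      obtain ⟨l⟩ := t
      have IH := fun a (ha : a ∈ l) => ih a (sizeOf_mem_le ha ht)
      rw [norm_node, code_node, code_node]
      have hperm : (List.insertionSort rle (l.map norm)).Perm (l.map norm) :=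
        List.perm_insertionSort rle (l.map norm)
      rw [List.Perm.prod_eq (hperm.map (fun c => Nat.nth Nat.Prime (code c)))]
      rw [List.map_map]
      exact congrArg List.prod (List.map_congr_left (fun a ha => by
        simp only [Function.comp]; rw [IH a ha]))
  intro t; exact key (sizeOf t) t le_rfl

theorem code_inj : ∀ t : PT, ∀ s, code t = code s → norm t = norm s := by
  have key : ∀ n, ∀ t : PT, sizeOf t ≤ n → ∀ s, code t = code s → norm t = norm s := by
    intro n
    induction n with
    | zero => intro t h; obtain ⟨l⟩ := t; simp at h
    | succ n ih =>
      intro t ht s hcode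
      obtain ⟨l⟩ := t
      obtain ⟨l'⟩ := s
      have IH := fun a (ha : a ∈ l) => ih a (sizeOf_mem_le ha ht)
      rw [code_node, code_node] at hcode
      have hprime : ∀ p ∈ l.map (fun c => Nat.nth Nat.Prime (code c)), p.Prime := by
        intro p hp; obtain ⟨a, _, rfl⟩ := List.mem_map.1 hp; exact nthp_prime _
      have hprime' : ∀ p ∈ l'.map (fun c => Nat.nth Nat.Prime (code c)), p.Prime := by
        intro p hp; obtain ⟨a, _, rfl⟩ := List.mem_map.1 hp; exact nthp_prime _
      have hperm : (l.map (fun c => Nat.nth Nat.Prime (code c))).Perm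
          (l'.map (fun c => Nat.nth Nat.Prime (code c))) :=
        (Nat.primeFactorsList_unique hcode hprime).trans
          (Nat.primeFactorsList_unique rfl hprime').symm
      have hms : Multiset.map code (↑l : Multiset PT) = Multiset.map code (↑l' : Multiset PT) := by
        apply Multiset.map_injective nthp_inj
        rw [Multiset.map_map, Multiset.map_map]
        exact Multiset.coe_eq_coe.2 hperm
      have hrel : Multiset.Rel (fun a b => code a = code b)
          (↑l : Multiset PT) (↑l' : Multiset PT) := by
        rw [← Multiset.rel_map (f := code) (g := code), hms]
        exact Multiset.rel_eq.2 rfl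
      have hreln : Multiset.Rel (fun a b => norm a = norm b)
          (↑l : Multiset PT) (↑l' : Multiset PT) :=
        hrel.mono (fun a ha b _ hc => IH a (by exact_mod_cast ha) b hc)
      have hmn : Multiset.map norm (↑l : Multiset PT) = Multiset.map norm (↑l' : Multiset PT) := by
        rw [← Multiset.rel_eq, Multiset.rel_map (f := norm) (g := norm)]; exact hreln
      have hpn : (l.map norm).Perm (l'.map norm) := by
        rw [← Multiset.coe_eq_coe]; exact_mod_cast hmn
      rw [norm_node, norm_node]
      congr 1
      apply sorted_eq
      · exact ((List.perm_insertionSort rle (l.map norm)).trans hpn).trans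
          (List.perm_insertionSort rle (l'.map norm)).symm
      · exact List.pairwise_insertionSort rle (l.map norm)
      · exact List.pairwise_insertionSort rle (l'.map norm)
      · intro x hx y hy hc
        have hx' := (List.perm_insertionSort rle (l.map norm)).mem_iff.1 hx
        have hy' := (List.perm_insertionSort rle (l'.map norm)).mem_iff.1 hy
        obtain ⟨a, ha, rfl⟩ := List.mem_map.1 hx'
        obtain ⟨b, hb, rfl⟩ := List.mem_map.1 hy'
        exact IH a ha b (by rw [← code_norm a, ← code_norm b]; exact hc)
  intro t; exact key (sizeOf t) t le_rfl

theorem norm_norm : ∀ t : PT, norm (norm t) = norm t := by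
  have key : ∀ n, ∀ t : PT, sizeOf t ≤ n → norm (norm t) = norm t := by
    intro n
    induction n with
    | zero => intro t h; obtain ⟨l⟩ := t; simp at h
    | succ n ih =>
      intro t ht
      obtain ⟨l⟩ := t
      set L := List.insertionSort rle (l.map norm) with hL
      have hnn : norm (node l) = node L := norm_node l
      have hLmem : ∀ x ∈ L, ∃ a ∈ l, x = norm a := by
        intro x hx
        have : x ∈ l.map norm := (List.perm_insertionSort rle (l.map norm)).mem_iff.1 hx
        obtain ⟨a, ha, rfl⟩ := List.mem_map.1 this
        exact ⟨a, ha, rfl⟩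
      have hmapL : L.map norm = L := by
        have h2 : L.map norm = L.map id := List.map_congr_left (fun x hx => by
          obtain ⟨a, ha, rfl⟩ := hLmem x hx
          exact ih a (sizeOf_mem_le ha ht))
        simpa using h2
      rw [hnn, norm_node, hmapL]
      congr 1
      exact List.Pairwise.insertionSort_eq (List.pairwise_insertionSort rle (l.map norm))
  intro t; exact key (sizeOf t) t le_rfl

/-- the multiset of normalized trees of a forest -/
noncomputable def keyF (m : List PT) : Multiset PT := (m.map norm : List PT)

@[simp] theorem keyF_nil : keyF [] = 0 := rfl
@[simp] theorem keyF_cons (a : PT) (m : List PT) : keyF (a :: m) = norm a ::ₘ keyF m := rfl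

-- reconstruct the canonical planar tree from a multiset of (normalized) branches
open Classical in
noncomputable def hM (m : Multiset PT) : PT :=
  node (if hx : ∃ L : List PT, L.Pairwise rle ∧ (↑L : Multiset PT) = m then hx.choose else [])

theorem norm_node_h (l : List PT) : norm (node l) = hM (keyF l) := by
  rw [norm_node]
  unfold hM
  have hx : ∃ L : List PT, L.Pairwise rle ∧ (↑L : Multiset PT) = keyF l :=
    ⟨List.insertionSort rle (l.map norm), List.pairwise_insertionSort rle _,
      Multiset.coe_eq_coe.2 (List.perm_insertionSort rle _)⟩
  rw [dif_pos hx]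
  obtain ⟨hsort, hcoe⟩ := hx.choose_spec
  congr 1
  apply sorted_eq
  · exact (List.perm_insertionSort rle (l.map norm)).trans
      (Multiset.coe_eq_coe.1 hcoe).symm
  · exact List.pairwise_insertionSort rle _
  · exact hsort
  · intro x hx' y hy' hc
    have hx'' : x ∈ l.map norm := (List.perm_insertionSort rle (l.map norm)).mem_iff.1 hx'
    have hy'' : y ∈ l.map norm := (Multiset.coe_eq_coe.1 hcoe).mem_iff.1 hy'
    obtain ⟨a, _, rfl⟩ := List.mem_map.1 hx''
    obtain ⟨b, _, rfl⟩ := List.mem_map.1 hy''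
    have : code a = code b := by rw [← code_norm a, ← code_norm b]; exact hc
    exact code_inj a b this

theorem norm_node_eq (l l' : List PT) (h : keyF l = keyF l') :
    norm (node l) = norm (node l') := by
  rw [norm_node_h, norm_node_h, h]

theorem erase_cons_mem {b : PT} {s : Multiset PT} (a : PT) (hb : b ∈ s) :
    (a ::ₘ s).erase b = a ::ₘ s.erase b := by
  by_cases hab : b = a
  · subst hab
    rw [Multiset.erase_cons_head, Multiset.cons_erase hb]
  · rw [Multiset.erase_cons_tail]
    exact fun h => hab h.symm

theorem graftTF_nil (t : PT) : graftTF t [] = 0 := by rw [graftTF]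

theorem graftTF_cons (t : PT) (l ω : List PT) :
    graftTF t (node l :: ω) =
      {node (t :: l) :: ω}
      + (graftTF t l).map (fun l' => node l' :: ω)
      + (graftTF t ω).map (fun ω' => node l :: ω') := by
  rw [graftTF]

theorem graftAll_node (t : PT) (l : List PT) :
    graftAll t (node l) = node (t :: l) ::ₘ (graftTF t l).map node := by
  rw [graftAll]

theorem sum_map_map {α β : Type} (g : Multiset α → Multiset β) (hg : ∀ a b, g (a + b) = g a + g b)
    (hg0 : g 0 = 0) (L : List (Multiset α)) :
    g L.sum = (L.map g).sum := by
  induction L with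
  | nil => simpa using hg0
  | cons a L ih => simp [hg, ih]

theorem mem_keyF {c : PT} {m : List PT} (hc : c ∈ m) : norm c ∈ keyF m := by
  simp only [keyF, Multiset.mem_coe, List.mem_map]
  exact ⟨c, hc, rfl⟩

/-- closed form for grafting into a forest, at the level of `keyF` -/
theorem G2 (t : PT) : ∀ (m : List PT), (graftTF t m).map keyF =
    (m.map (fun c => (graftAll t c).map (fun x => norm x ::ₘ (keyF m).erase (norm c)))).sum := by
  intro m
  induction m with
  | nil => simp [graftTF_nil]
  | cons c ω ih =>
    obtain ⟨lc⟩ := c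
    rw [graftTF_cons]
    simp only [Multiset.map_add, Multiset.map_map, List.map_cons, List.sum_cons]
    -- head term
    rw [graftAll_node]
    simp only [Multiset.map_cons, Multiset.map_map]
    rw [keyF_cons, Multiset.erase_cons_head]
    have htail : (ω.map (fun c' => (graftAll t c').map
        (fun x => norm x ::ₘ (norm (node lc) ::ₘ keyF ω).erase (norm c')))).sum
        = ((graftTF t ω).map keyF).map (fun k => norm (node lc) ::ₘ k) := by
      rw [ih]
      rw [sum_map_map (fun k => Multiset.map (fun k' => norm (node lc) ::ₘ k') k)
        (fun a b => Multiset.map_add _ a b) (Multiset.map_zero _)]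
      rw [List.map_map]
      refine congrArg List.sum (List.map_congr_left ?_)
      intro c' hc'
      rw [erase_cons_mem _ (mem_keyF hc')]
      simp only [Function.comp_apply, Multiset.map_map, Function.comp_def]
      exact Multiset.map_congr rfl (fun x _ => Multiset.cons_swap _ _ _)
    rw [htail]
    simp only [Multiset.map_singleton, Multiset.map_map, Function.comp_def, keyF_cons,
      Multiset.singleton_add, Multiset.cons_add]

/-- grafting is invariant under normalization, at the level of `map norm` -/
theorem inv : ∀ (u t t' : PT), norm t = norm t' →
    (graftAll t u).map norm = (graftAll t' (norm u)).map norm := by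
  have key : ∀ n, ∀ (u : PT), sizeOf u ≤ n → ∀ t t' : PT, norm t = norm t' →
      (graftAll t u).map norm = (graftAll t' (norm u)).map norm := by
    intro n
    induction n with
    | zero => intro u h; obtain ⟨m⟩ := u; simp at h
    | succ n ih =>
      intro u hu t t' htt
      obtain ⟨m⟩ := u
      set L := List.insertionSort rle (m.map norm) with hLdef
      have hnu : norm (node m) = node L := norm_node m
      have hLmem : ∀ d ∈ L, ∃ a ∈ m, d = norm a := by
        intro d hd
        have : d ∈ m.map norm := (List.perm_insertionSort rle (m.map norm)).mem_iff.1 hd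
        obtain ⟨a, ha, rfl⟩ := List.mem_map.1 this
        exact ⟨a, ha, rfl⟩
      have hLnorm : ∀ d ∈ L, norm d = d := by
        intro d hd; obtain ⟨a, _, rfl⟩ := hLmem d hd; exact norm_norm a
      have hkeyL : keyF L = keyF m := by
        show ((L.map norm : List PT) : Multiset PT) = _
        rw [List.map_congr_left hLnorm, List.map_id']
        exact Multiset.coe_eq_coe.2 (List.perm_insertionSort rle (m.map norm))
      -- both sides in closed form
      have expand : ∀ (s : PT) (w : List PT),
          (graftAll s (node w)).map norm
            = hM (norm s ::ₘ keyF w) ::ₘ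
              (w.map (fun c => ((graftAll s c).map norm).map
                (fun k => hM (k ::ₘ (keyF w).erase (norm c))))).sum := by
        intro s w
        rw [graftAll_node, Multiset.map_cons, Multiset.map_map]
        congr 1
        · rw [norm_node_h]; rfl
        · have : (norm ∘ node : List PT → PT) = fun x => hM (keyF x) := by
            funext x; exact norm_node_h x
          rw [this]
          have : (fun (x : List PT) => hM (keyF x)) = hM ∘ keyF := rfl
          rw [this, ← Multiset.map_map, G2]
          rw [sum_map_map (Multiset.map hM) (fun a b => Multiset.map_add _ a b)
            (Multiset.map_zero _), List.map_map]
          refine congrArg List.sum (List.map_congr_left ?_)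
          intro c _
          simp only [Function.comp_apply, Multiset.map_map, Function.comp_def]
      rw [expand t m, hnu, expand t' L, htt, hkeyL]
      congr 1
      have hc_m : ∀ c ∈ m, ((graftAll t c).map norm).map
            (fun k => hM (k ::ₘ (keyF m).erase (norm c)))
          = ((graftAll t' (norm c)).map norm).map
            (fun k => hM (k ::ₘ (keyF m).erase (norm c))) := by
        intro c hc
        rw [ih c (sizeOf_mem_le hc hu) t t' htt]
      rw [List.map_congr_left hc_m]
      have hstep : (m.map (fun c => ((graftAll t' (norm c)).map norm).map
            (fun k => hM (k ::ₘ (keyF m).erase (norm c)))))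
          = (m.map norm).map (fun d => ((graftAll t' d).map norm).map
            (fun k => hM (k ::ₘ (keyF m).erase d))) := by
        rw [List.map_map]
        exact List.map_congr_left (fun c _ => rfl)
      rw [hstep]
      have hperm : ((m.map norm).map (fun d => ((graftAll t' d).map norm).map
            (fun k => hM (k ::ₘ (keyF m).erase d)))).Perm
          (L.map (fun d => ((graftAll t' d).map norm).map
            (fun k => hM (k ::ₘ (keyF m).erase d)))) :=
        ((List.perm_insertionSort rle (m.map norm)).map _).symm
      rw [hperm.sum_eq]
      refine congrArg List.sum (List.map_congr_left ?_)
      intro d hd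
      rw [hLnorm d hd]
  intro u t t' h; exact key (sizeOf u) u le_rfl t t' h

theorem inv_right (t u u' : PT) (h : norm u = norm u') :
    (graftAll t u).map norm = (graftAll t u').map norm := by
  rw [inv u t t rfl, inv u' t t rfl, h]

theorem inv_left (t t' u : PT) (h : norm t = norm t') :
    (graftAll t u).map norm = (graftAll t' u).map norm := by
  rw [inv u t t' h, inv u t' t' rfl]

/-- double grafting of `t` and `s` at (ordered) pairs of vertices of a forest -/
def C2F (t s : PT) : List PT → Multiset (List PT)
  | [] => 0
  | node lc :: ω =>
      {node (t :: s :: lc) :: ω}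
      + (graftTF t lc).map (fun lc' => node (s :: lc') :: ω)
      + (graftTF t ω).map (fun ω' => node (s :: lc) :: ω')
      + (graftTF s lc).map (fun lc' => node (t :: lc') :: ω)
      + (graftTF s ω).map (fun ω' => node (t :: lc) :: ω')
      + (graftTF s lc).bind (fun lc' => (graftTF t ω).map (fun ω' => node lc' :: ω'))
      + (graftTF s ω).bind (fun ω' => (graftTF t lc).map (fun lc' => node lc' :: ω'))
      + (C2F t s lc).map (fun lc' => node lc' :: ω)
      + (C2F t s ω).map (fun ω' => node lc :: ω')
decreasing_by
  all_goals simp_wf <;> omega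

theorem C2F_nil (t s : PT) : C2F t s [] = 0 := by rw [C2F]

theorem C2F_cons (t s : PT) (lc ω : List PT) :
    C2F t s (node lc :: ω) =
      {node (t :: s :: lc) :: ω}
      + (graftTF t lc).map (fun lc' => node (s :: lc') :: ω)
      + (graftTF t ω).map (fun ω' => node (s :: lc) :: ω')
      + (graftTF s lc).map (fun lc' => node (t :: lc') :: ω)
      + (graftTF s ω).map (fun ω' => node (t :: lc) :: ω')
      + (graftTF s lc).bind (fun lc' => (graftTF t ω).map (fun ω' => node lc' :: ω'))
      + (graftTF s ω).bind (fun ω' => (graftTF t lc).map (fun lc' => node lc' :: ω'))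
      + (C2F t s lc).map (fun lc' => node lc' :: ω)
      + (C2F t s ω).map (fun ω' => node lc :: ω') := by
  rw [C2F]

/-- double grafting of `t` and `s` at (ordered) pairs of vertices of a tree -/
def C2T (t s : PT) : PT → Multiset PT
  | node m =>
      node (t :: s :: m) ::ₘ
        ((graftTF t m).map (fun m' => node (s :: m'))
         + (graftTF s m).map (fun m' => node (t :: m'))
         + (C2F t s m).map node)

theorem C2T_node (t s : PT) (m : List PT) :
    C2T t s (node m) =
      node (t :: s :: m) ::ₘ
        ((graftTF t m).map (fun m' => node (s :: m'))
         + (graftTF s m).map (fun m' => node (t :: m'))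
         + (C2F t s m).map node) := by
  rw [C2T]

theorem etaCons (a : PT) : (fun x : List PT => a :: x) = List.cons a := rfl

theorem etaNode : (fun x : List PT => node x) = node := rfl

/-- the planar decomposition of iterated grafting into a forest -/
theorem P1F (t s : PT) : ∀ (m : List PT),
    (graftTF s m).bind (graftTF t)
      = C2F t s m + (graftAll t s).bind (fun y => graftTF y m) := by
  have key : ∀ n, ∀ (m : List PT), sizeOf m ≤ n →
      (graftTF s m).bind (graftTF t)
        = C2F t s m + (graftAll t s).bind (fun y => graftTF y m) := by
    intro n
    induction n with
    | zero => intro m h; exfalso; cases m <;> simp at h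
    | succ n ih =>
      intro m hm
      match m with
      | [] => simp [graftTF_nil, C2F_nil, Multiset.zero_bind]
      | node lc :: ω =>
        have hlc : sizeOf lc ≤ n := by
          have : sizeOf (node lc :: ω) = 1 + sizeOf (node lc) + sizeOf ω := by simp
          have : sizeOf (node lc) = 1 + sizeOf lc := by simp
          omega
        have hω : sizeOf ω ≤ n := by
          have : sizeOf (node lc :: ω) = 1 + sizeOf (node lc) + sizeOf ω := by simp
          omega
        obtain ⟨ls⟩ := s
        rw [graftTF_cons, C2F_cons, graftAll_node]
        simp only [Multiset.add_bind, Multiset.singleton_bind, Multiset.bind_map,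
          Multiset.cons_bind, graftTF_cons, Multiset.bind_add, Multiset.bind_singleton,
          Multiset.map_add]
        simp only [← Multiset.map_bind]
        rw [ih lc hlc, ih ω hω]
        simp only [graftAll_node, Multiset.cons_bind, Multiset.bind_map, Multiset.map_add,
          graftTF_cons, Multiset.bind_add, Multiset.bind_singleton]
        simp only [Multiset.map_cons, Multiset.map_singleton, Multiset.map_map,
          Function.comp_def, etaCons, ← Multiset.singleton_add, Multiset.map_add]
        abel
  intro m; exact key (sizeOf m) m le_rfl

/-- the planar decomposition of iterated grafting into a tree -/
theorem P1T (t s u : PT) :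
    (graftAll s u).bind (graftAll t)
      = C2T t s u + (graftAll t s).bind (fun y => graftAll y u) := by
  obtain ⟨m⟩ := u
  obtain ⟨ls⟩ := s
  rw [C2T_node]
  simp only [graftAll_node, Multiset.cons_bind, Multiset.bind_map, graftTF_cons,
    Multiset.bind_cons, Multiset.bind_add, Multiset.bind_singleton, Multiset.map_add,
    Multiset.map_cons]
  simp only [← Multiset.map_bind]
  rw [P1F t (node ls) m]
  simp only [graftAll_node, Multiset.cons_bind, Multiset.bind_map, Multiset.map_add,
    graftTF_cons, Multiset.bind_add, Multiset.bind_singleton, Multiset.map_cons,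
    Multiset.map_singleton, Multiset.map_map, Function.comp_def, etaCons, etaNode,
    Multiset.add_bind, Multiset.singleton_bind,
    ← Multiset.singleton_add]
  abel

theorem bind_map_comm {α β γ : Type} (A : Multiset α) (B : Multiset β) (f : α → β → γ) :
    A.bind (fun a => B.map (f a)) = B.bind (fun b => A.map (fun a => f a b)) := by
  have h1 : ∀ a, B.map (f a) = B.bind (fun b => {f a b}) := fun a =>
    (Multiset.bind_singleton B (f a)).symm
  have h2 : ∀ b, A.map (fun a => f a b) = A.bind (fun a => {f a b}) := fun b =>
    (Multiset.bind_singleton A (fun a => f a b)).symm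
  simp only [h1, h2]
  exact Multiset.bind_bind A B

theorem norm_two_swap (t s : PT) (lc : List PT) :
    norm (node (t :: s :: lc)) = norm (node (s :: t :: lc)) := by
  apply norm_node_eq
  rw [keyF_cons, keyF_cons, keyF_cons, keyF_cons, Multiset.cons_swap]

/-- symmetry of double grafting into a forest, modulo planarity -/
theorem P2F (t s : PT) : ∀ (m : List PT),
    (C2F t s m).map keyF = (C2F s t m).map keyF := by
  have key : ∀ n, ∀ (m : List PT), sizeOf m ≤ n →
      (C2F t s m).map keyF = (C2F s t m).map keyF := by
    intro n
    induction n with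
    | zero => intro m h; exfalso; cases m <;> simp at h
    | succ n ih =>
      intro m hm
      match m with
      | [] => rw [C2F_nil, C2F_nil]
      | node lc :: ω =>
        have hlc : sizeOf lc ≤ n := by
          have h1 : sizeOf (node lc :: ω) = 1 + sizeOf (node lc) + sizeOf ω := by simp
          have h2 : sizeOf (node lc) = 1 + sizeOf lc := by simp
          omega
        have hω : sizeOf ω ≤ n := by
          have h1 : sizeOf (node lc :: ω) = 1 + sizeOf (node lc) + sizeOf ω := by simp
          omega
        rw [C2F_cons, C2F_cons]
        simp only [Multiset.map_add, Multiset.map_singleton, Multiset.map_map,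
          Multiset.map_bind, Function.comp_def, keyF_cons]
        -- head term
        rw [norm_two_swap]
        -- the two cross terms
        rw [bind_map_comm (graftTF s lc) (graftTF t ω)
            (fun a x => norm (node a) ::ₘ keyF x),
          bind_map_comm (graftTF s ω) (graftTF t lc)
            (fun a x => norm (node x) ::ₘ keyF a)]
        -- recursive terms
        have hfac : ∀ (X : Multiset (List PT)) (Y : Multiset (List PT)),
            X.map keyF = Y.map keyF → ∀ (w : List PT),
            X.map (fun lc' => norm (node lc') ::ₘ keyF w)
              = Y.map (fun lc' => norm (node lc') ::ₘ keyF w) := by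
          intro X Y hXY w
          have : (fun lc' : List PT => norm (node lc') ::ₘ keyF w)
              = (fun k => hM k ::ₘ keyF w) ∘ keyF := by
            funext lc'; rw [Function.comp_apply, norm_node_h]
          rw [this, ← Multiset.map_map, ← Multiset.map_map, hXY]
        have h8 := hfac _ _ (ih lc hlc) ω
        have h9 : (C2F t s ω).map (fun ω' => norm (node lc) ::ₘ keyF ω')
            = (C2F s t ω).map (fun ω' => norm (node lc) ::ₘ keyF ω') := by
          have : (fun ω' : List PT => norm (node lc) ::ₘ keyF ω')
              = (fun k => norm (node lc) ::ₘ k) ∘ keyF := rfl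
          rw [this, ← Multiset.map_map, ← Multiset.map_map, ih ω hω]
        rw [h8, h9]
        abel
  intro m; exact key (sizeOf m) m le_rfl

/-- symmetry of double grafting into a tree, modulo planarity -/
theorem P2T (t s u : PT) : (C2T t s u).map norm = (C2T s t u).map norm := by
  obtain ⟨m⟩ := u
  rw [C2T_node, C2T_node]
  simp only [Multiset.map_cons, Multiset.map_add, Multiset.map_map, Function.comp_def]
  rw [norm_two_swap]
  have h3 : (C2F t s m).map (fun x => norm (node x))
      = (C2F s t m).map (fun x => norm (node x)) := by
    have : (fun x : List PT => norm (node x)) = hM ∘ keyF := funext fun x => norm_node_h x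
    rw [this, ← Multiset.map_map, ← Multiset.map_map, P2F]
  rw [h3]
  congr 1
  abel

/-- the combinatorial pre-Lie identity, at the level of multisets of trees -/
theorem Eprime (t s u : PT) :
    ((graftAll s u).bind (graftAll t)).map norm
      + ((graftAll s t).bind (fun y => graftAll y u)).map norm
    = ((graftAll t u).bind (graftAll s)).map norm
      + ((graftAll t s).bind (fun y => graftAll y u)).map norm := by
  rw [P1T t s u, P1T s t u]
  simp only [Multiset.map_add]
  rw [P2T t s u]
  abel

end PT

/-- The grafting product `τ ↷ σ` with values in the free real vector space on
(isomorphism classes of) rooted trees. -/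
noncomputable def gr (τ σ : PT) : PT →₀ ℝ :=
  ((PT.graftAll τ σ).map (fun t => Finsupp.single (PT.norm t) (1 : ℝ))).sum

/-- The bilinear extension of `↷` to the free vector space on rooted trees. -/
noncomputable def G (f g : PT →₀ ℝ) : PT →₀ ℝ :=
  f.sum (fun t a => g.sum (fun s b => (a * b) • gr t s))

open PT

/-- sum of delta functions on the normalizations of a multiset of trees -/
noncomputable def SN (M : Multiset PT) : PT →₀ ℝ :=
  (M.map (fun z => Finsupp.single (PT.norm z) (1 : ℝ))).sum

theorem gr_eq_SN (t s : PT) : gr t s = SN (graftAll t s) := rfl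

theorem SN_congr {M N : Multiset PT} (h : M.map norm = N.map norm) : SN M = SN N := by
  unfold SN
  have e : ∀ K : Multiset PT, K.map (fun z => Finsupp.single (norm z) (1 : ℝ))
      = (K.map norm).map (fun n => Finsupp.single n (1 : ℝ)) := by
    intro K; rw [Multiset.map_map]; rfl
  rw [e, e, h]

theorem SN_add (M N : Multiset PT) : SN (M + N) = SN M + SN N := by
  simp [SN, Multiset.map_add, Multiset.sum_add]

theorem gr_norm_right (t x : PT) : gr t (norm x) = gr t x := by
  rw [gr_eq_SN, gr_eq_SN]
  exact SN_congr (inv_right t (norm x) x (norm_norm x))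

theorem gr_norm_left (y u : PT) : gr (norm y) u = gr y u := by
  rw [gr_eq_SN, gr_eq_SN]
  exact SN_congr (inv_left (norm y) y u (norm_norm y))

/-- left grafting by a fixed tree, as a function of finsupps -/
noncomputable def Gt (t : PT) (X : PT →₀ ℝ) : PT →₀ ℝ := X.sum (fun s b => b • gr t s)

/-- right grafting into a fixed tree, as a function of finsupps -/
noncomputable def Gu (X : PT →₀ ℝ) (u : PT) : PT →₀ ℝ := X.sum (fun y a => a • gr y u)

theorem Gt_SN (t : PT) (M : Multiset PT) : Gt t (SN M) = SN (M.bind (graftAll t)) := by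
  induction M using Multiset.induction with
  | empty => simp [SN, Gt]
  | cons x M ih =>
    have h1 : SN (x ::ₘ M) = Finsupp.single (norm x) (1 : ℝ) + SN M := by
      simp [SN, Multiset.map_cons, Multiset.sum_cons]
    have h2 : Gt t (Finsupp.single (norm x) (1 : ℝ) + SN M)
        = Gt t (Finsupp.single (norm x) (1 : ℝ)) + Gt t (SN M) := by
      unfold Gt
      exact Finsupp.sum_add_index' (fun s => by simp) (fun s b₁ b₂ => add_smul b₁ b₂ _)
    have h3 : Gt t (Finsupp.single (norm x) (1 : ℝ)) = gr t x := by
      unfold Gt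
      rw [Finsupp.sum_single_index (by simp), one_smul, gr_norm_right]
    rw [h1, h2, h3, Multiset.cons_bind, SN_add, ih, gr_eq_SN]

theorem Gu_SN (M : Multiset PT) (u : PT) :
    Gu (SN M) u = SN (M.bind (fun y => graftAll y u)) := by
  induction M using Multiset.induction with
  | empty => simp [SN, Gu]
  | cons x M ih =>
    have h1 : SN (x ::ₘ M) = Finsupp.single (norm x) (1 : ℝ) + SN M := by
      simp [SN, Multiset.map_cons, Multiset.sum_cons]
    have h2 : Gu (Finsupp.single (norm x) (1 : ℝ) + SN M) u
        = Gu (Finsupp.single (norm x) (1 : ℝ)) u + Gu (SN M) u := by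
      unfold Gu
      exact Finsupp.sum_add_index' (fun s => by simp) (fun s b₁ b₂ => add_smul b₁ b₂ _)
    have h3 : Gu (Finsupp.single (norm x) (1 : ℝ)) u = gr x u := by
      unfold Gu
      rw [Finsupp.sum_single_index (by simp), one_smul, gr_norm_left]
    rw [h1, h2, h3, Multiset.cons_bind, SN_add, ih, gr_eq_SN]

/-- the pre-Lie identity for single trees -/
theorem key3 (t s u : PT) :
    Gt t (gr s u) - Gu (gr t s) u = Gt s (gr t u) - Gu (gr s t) u := by
  rw [gr_eq_SN s u, gr_eq_SN t s, gr_eq_SN t u, gr_eq_SN s t, Gt_SN, Gt_SN, Gu_SN, Gu_SN]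
  rw [sub_eq_sub_iff_add_eq_add]
  rw [← SN_add, ← SN_add]
  apply SN_congr
  simp only [Multiset.map_add]
  exact PT.Eprime t s u

theorem G_zero_left (g : PT →₀ ℝ) : G 0 g = 0 := by
  unfold G; exact Finsupp.sum_zero_index

theorem G_zero_right (f : PT →₀ ℝ) : G f 0 = 0 := by
  unfold G
  simp [Finsupp.sum_zero_index]

theorem G_add_left (f₁ f₂ g : PT →₀ ℝ) : G (f₁ + f₂) g = G f₁ g + G f₂ g := by
  unfold G
  refine Finsupp.sum_add_index' (fun t => ?_) (fun t a₁ a₂ => ?_)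
  · simp
  · rw [← Finsupp.sum_add]
    refine Finsupp.sum_congr (fun s _ => ?_)
    rw [add_mul, add_smul]

theorem G_add_right (f g₁ g₂ : PT →₀ ℝ) : G f (g₁ + g₂) = G f g₁ + G f g₂ := by
  unfold G
  rw [← Finsupp.sum_add]
  refine Finsupp.sum_congr (fun t _ => ?_)
  exact Finsupp.sum_add_index' (fun s => by simp) (fun s b₁ b₂ => by rw [mul_add, add_smul])

theorem G_single_left (t : PT) (a : ℝ) (X : PT →₀ ℝ) : G (Finsupp.single t a) X = a • Gt t X := by
  unfold G Gt
  rw [Finsupp.sum_single_index (by simp)]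
  rw [Finsupp.smul_sum]
  exact Finsupp.sum_congr (fun s _ => by rw [mul_smul])

theorem G_single_right (X : PT →₀ ℝ) (u : PT) (c : ℝ) :
    G X (Finsupp.single u c) = c • Gu X u := by
  unfold G Gu
  rw [Finsupp.smul_sum]
  refine Finsupp.sum_congr (fun t _ => ?_)
  rw [Finsupp.sum_single_index (by simp)]
  rw [mul_comm, mul_smul]

theorem Gt_smul (t : PT) (r : ℝ) (X : PT →₀ ℝ) : Gt t (r • X) = r • Gt t X := by
  unfold Gt
  rw [Finsupp.sum_smul_index' (fun s => by simp), Finsupp.smul_sum]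
  exact Finsupp.sum_congr (fun s _ => by rw [smul_eq_mul, mul_smul])

theorem Gu_smul (r : ℝ) (X : PT →₀ ℝ) (u : PT) : Gu (r • X) u = r • Gu X u := by
  unfold Gu
  rw [Finsupp.sum_smul_index' (fun s => by simp), Finsupp.smul_sum]
  exact Finsupp.sum_congr (fun s _ => by rw [smul_eq_mul, mul_smul])

theorem G_smul_left (r : ℝ) (f g : PT →₀ ℝ) : G (r • f) g = r • G f g := by
  unfold G
  rw [Finsupp.sum_smul_index' (fun t => by simp), Finsupp.smul_sum]
  refine Finsupp.sum_congr (fun t _ => ?_)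
  rw [Finsupp.smul_sum]
  refine Finsupp.sum_congr (fun s _ => ?_)
  rw [smul_eq_mul, mul_assoc, mul_smul]

theorem Gt_single (t s : PT) (b : ℝ) : Gt t (Finsupp.single s b) = b • gr t s := by
  unfold Gt
  rw [Finsupp.sum_single_index (by simp)]

theorem Gu_single (y : PT) (a : ℝ) (u : PT) : Gu (Finsupp.single y a) u = a • gr y u := by
  unfold Gu
  rw [Finsupp.sum_single_index (by simp)]

theorem G_ss (t s : PT) (a b : ℝ) :
    G (Finsupp.single t a) (Finsupp.single s b) = (a * b) • gr t s := by
  rw [G_single_left, Gt_single, smul_smul]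

/-- the grafting product on rooted trees satisfies the left pre-Lie
identity `x↷(y↷z) − (x↷y)↷z = y↷(x↷z) − (y↷x)↷z`. -/
theorem grafting_preLie (f g h : PT →₀ ℝ) :
    G f (G g h) - G (G f g) h = G g (G f h) - G (G g f) h := by
  induction f using Finsupp.induction_linear with
  | zero => simp [G_zero_left, G_zero_right]
  | add f₁ f₂ ih₁ ih₂ =>
    simp only [G_add_left, G_add_right]
    rw [add_sub_add_comm, ih₁, ih₂, ← add_sub_add_comm]
  | single t a =>
    induction g using Finsupp.induction_linear with
    | zero => simp [G_zero_left, G_zero_right]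
    | add g₁ g₂ ih₁ ih₂ =>
      simp only [G_add_left, G_add_right]
      rw [add_sub_add_comm, ih₁, ih₂, ← add_sub_add_comm]
    | single s b =>
      induction h using Finsupp.induction_linear with
      | zero => simp [G_zero_left, G_zero_right]
      | add h₁ h₂ ih₁ ih₂ =>
        simp only [G_add_left, G_add_right]
        rw [add_sub_add_comm, ih₁, ih₂, ← add_sub_add_comm]
      | single u c =>
        rw [G_ss s u b c, G_ss t s a b, G_ss t u a c, G_ss s t b a]
        rw [G_single_left t a, Gt_smul, G_single_left s b, Gt_smul]
        rw [G_smul_left, G_smul_left, G_single_right, G_single_right]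
        simp only [smul_smul]
        rw [show a * (b * c) = a * b * c from by ring,
          show b * (a * c) = a * b * c from by ring,
          show b * a * c = a * b * c from by ring,
          ← smul_sub, ← smul_sub, key3]
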